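/- Let q_a(x₁,x₂,x₃,x₄) = 7x₁² + 7x₂² − x₃² + a x₄² for a positive integer a. If a ≡ −1 (mod 8), then q_a does not represent 0 nontrivially over ℚ. -/
import Mathlib

lemma zmod8_key : ∀ u v w t : ZMod 8, 7*u^2+7*v^2-w^2+7*t^2 = 0 →
    4*u = 0 ∧ 4*v = 0 ∧ 4*w = 0 ∧ 4*t = 0 := by decide

lemma even_of_zmod8 (y : ℤ) (h : ((4 * y : ℤ) : ZMod 8) = 0) : 2 ∣ y := by
  rw [ZMod.intCast_zmod_eq_zero_iff_dvd] at h
  omega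

lemma int_descent (a : ℤ) (h8 : a % 8 = 7) :
    ∀ n : ℕ, ∀ y₁ y₂ y₃ y₄ : ℤ,
      y₁.natAbs + y₂.natAbs + y₃.natAbs + y₄.natAbs = n →
      7 * y₁ ^ 2 + 7 * y₂ ^ 2 - y₃ ^ 2 + a * y₄ ^ 2 = 0 →
      y₁ = 0 ∧ y₂ = 0 ∧ y₃ = 0 ∧ y₄ = 0 := by
  intro n
  induction n using Nat.strong_induction_on with
  | _ n ih =>
    intro y₁ y₂ y₃ y₄ hn heq
    rcases Nat.eq_zero_or_pos n with hz | hpos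
    · omega
    · have ha8 : (a : ZMod 8) = 7 := by
        have : a = 8 * (a / 8) + 7 := by omega
        rw [this]; push_cast
        rw [show (8 : ZMod 8) = 0 from by decide]
        ring
      have hcast : ((7 * y₁ ^ 2 + 7 * y₂ ^ 2 - y₃ ^ 2 + a * y₄ ^ 2 : ℤ) : ZMod 8) = 0 := by
        rw [heq]; simp
      push_cast at hcast
      rw [ha8] at hcast
      obtain ⟨h1, h2, h3, h4⟩ := zmod8_key _ _ _ _ hcast
      have d1 : 2 ∣ y₁ := even_of_zmod8 y₁ (by push_cast; exact h1)
      have d2 : 2 ∣ y₂ := even_of_zmod8 y₂ (by push_cast; exact h2)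
      have d3 : 2 ∣ y₃ := even_of_zmod8 y₃ (by push_cast; exact h3)
      have d4 : 2 ∣ y₄ := even_of_zmod8 y₄ (by push_cast; exact h4)
      obtain ⟨z₁, rfl⟩ := d1
      obtain ⟨z₂, rfl⟩ := d2
      obtain ⟨z₃, rfl⟩ := d3
      obtain ⟨z₄, rfl⟩ := d4
      have heq' : 7 * z₁ ^ 2 + 7 * z₂ ^ 2 - z₃ ^ 2 + a * z₄ ^ 2 = 0 := by nlinarith [heq]
      have hm : z₁.natAbs + z₂.natAbs + z₃.natAbs + z₄.natAbs < n := by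
        have e1 : (2*z₁).natAbs = 2 * z₁.natAbs := by simp [Int.natAbs_mul]
        have e2 : (2*z₂).natAbs = 2 * z₂.natAbs := by simp [Int.natAbs_mul]
        have e3 : (2*z₃).natAbs = 2 * z₃.natAbs := by simp [Int.natAbs_mul]
        have e4 : (2*z₄).natAbs = 2 * z₄.natAbs := by simp [Int.natAbs_mul]
        omega
      obtain ⟨r1, r2, r3, r4⟩ := ih _ hm z₁ z₂ z₃ z₄ rfl heq'
      subst r1 r2 r3 r4
      norm_num

/-- Let `q_a(x₁,x₂,x₃,x₄) = 7x₁² + 7x₂² − x₃² + a·x₄²` for a positive integer `a`.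
If `a ≡ −1 (mod 8)` then `q_a` does not represent `0` nontrivially over `ℚ`. -/
theorem stmt_11 (a : ℤ) (ha : 0 < a) (h8 : a % 8 = 7)
    (x₁ x₂ x₃ x₄ : ℚ)
    (h : 7 * x₁ ^ 2 + 7 * x₂ ^ 2 - x₃ ^ 2 + (a : ℚ) * x₄ ^ 2 = 0) :
    x₁ = 0 ∧ x₂ = 0 ∧ x₃ = 0 ∧ x₄ = 0 := by
  set N : ℚ := (x₁.den : ℚ) * x₂.den * x₃.den * x₄.den with hN
  have hden : ∀ x : ℚ, (x.den : ℚ) ≠ 0 := fun x => Nat.cast_ne_zero.mpr x.den_nz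
  have hNne : N ≠ 0 := by
    simp [hN, mul_ne_zero, hden x₁, hden x₂, hden x₃, hden x₄]
  set y₁ : ℤ := x₁.num * (x₂.den * x₃.den * x₄.den) with hy₁
  set y₂ : ℤ := x₂.num * (x₁.den * x₃.den * x₄.den) with hy₂
  set y₃ : ℤ := x₃.num * (x₁.den * x₂.den * x₄.den) with hy₃
  set y₄ : ℤ := x₄.num * (x₁.den * x₂.den * x₃.den) with hy₄
  have key : ∀ x : ℚ, (x.num : ℚ) = x * x.den := fun x => by
    have hx := Rat.num_div_den x
    rw [div_eq_iff (hden x)] at hx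
    exact hx
  have e1 : (y₁ : ℚ) = x₁ * N := by rw [hy₁]; push_cast; rw [key x₁]; ring
  have e2 : (y₂ : ℚ) = x₂ * N := by rw [hy₂]; push_cast; rw [key x₂]; ring
  have e3 : (y₃ : ℚ) = x₃ * N := by rw [hy₃]; push_cast; rw [key x₃]; ring
  have e4 : (y₄ : ℚ) = x₄ * N := by rw [hy₄]; push_cast; rw [key x₄]; ring
  have heqQ : ((7 * y₁ ^ 2 + 7 * y₂ ^ 2 - y₃ ^ 2 + a * y₄ ^ 2 : ℤ) : ℚ) = 0 := by
    push_cast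
    rw [e1, e2, e3, e4]
    have : (7 * x₁ ^ 2 + 7 * x₂ ^ 2 - x₃ ^ 2 + (a : ℚ) * x₄ ^ 2) * N ^ 2 = 0 := by
      rw [h]; ring
    linear_combination this
  have heqZ : 7 * y₁ ^ 2 + 7 * y₂ ^ 2 - y₃ ^ 2 + a * y₄ ^ 2 = 0 := by
    exact_mod_cast heqQ
  obtain ⟨r1, r2, r3, r4⟩ := int_descent a h8 _ y₁ y₂ y₃ y₄ rfl heqZ
  have num0 : ∀ (x : ℚ) (m : ℤ), x.num * m = 0 → m ≠ 0 → x = 0 := by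
    intro x m hm hne
    rcases mul_eq_zero.mp hm with h' | h'
    · exact Rat.num_eq_zero.mp h'
    · exact absurd h' hne
  refine ⟨num0 x₁ _ r1 ?_, num0 x₂ _ r2 ?_, num0 x₃ _ r3 ?_, num0 x₄ _ r4 ?_⟩ <;>
    positivity
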